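/- Let n ≥ 1, let c_1, …, c_n ≥ 0, set μ_j := √(1 + c_j) − 1 ≥ 0, and define f : (0,∞)ⁿ → ℝ by f(λ_1, …, λ_n) := Π_{j=1}^n λ_j^{μ_j/2}. Let Ĝ denote the lifted Jacobi operator of index (3/2, …, 3/2). Then f is an eigenfunction of the Schrödinger-type operator Ĝ − ¼ Σ_{j=1}^n c_j (1 − λ_j)/λ_j: for every λ ∈ (0,∞)ⁿ, (Ĝ f)(λ) − ¼ Σ_{j=1}^n c_j ((1 − λ_j)/λ_j) f(λ) = −[ (n−1) Σ_{j=1}^n μ_j + ¼ Σ_{1≤j≠ℓ≤n} μ_j μ_ℓ ] f(λ). -/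

import Mathlib

/-- Partial derivative `∂g/∂x_i` of a function `g : ℝⁿ → ℝ`. -/
noncomputable def pd {m : ℕ} (i : Fin m) (g : (Fin m → ℝ) → ℝ)
    (x : Fin m → ℝ) : ℝ :=
  fderiv ℝ g x (Pi.single i 1)

/-- The lifted Jacobi operator `Ĝ` of index `(3/2, …, 3/2)`. -/
noncomputable def Ghat (n : ℕ) (F : (Fin n → ℝ) → ℝ) (x : Fin n → ℝ) : ℝ :=
  (∑ j, x j * (1 - x j) * pd j (pd j F) x)
  + (∑ j, (2 - 2 * n * x j) * pd j F x)
  - ∑ j, ∑ ℓ, if j = ℓ then 0 else x j * x ℓ * pd j (pd ℓ F) x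

/- Auxiliary derivative lemmas. -/
section Aux
variable {n : ℕ}

lemma isOpen_posOrthant : IsOpen {x : Fin n → ℝ | ∀ j, 0 < x j} := by
  have : {x : Fin n → ℝ | ∀ j, 0 < x j} = ⋂ j, {x : Fin n → ℝ | 0 < x j} := by
    ext x; simp [Set.mem_iInter]
  rw [this]
  exact isOpen_iInter_of_finite fun j => isOpen_lt continuous_const (continuous_apply j)

noncomputable def Lmap (e x : Fin n → ℝ) : (Fin n → ℝ) →L[ℝ] ℝ :=
  ∑ j, (e j / x j) • (ContinuousLinearMap.proj j : (Fin n → ℝ) →L[ℝ] ℝ)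

lemma Lmap_apply_single (e x : Fin n → ℝ) (i : Fin n) :
    Lmap e x (Pi.single i 1) = e i / x i := by
  simp only [Lmap, ContinuousLinearMap.sum_apply, ContinuousLinearMap.smul_apply,
    ContinuousLinearMap.proj_apply, smul_eq_mul]
  rw [Finset.sum_eq_single i]
  · simp
  · intro b _ hb; simp [Pi.single_eq_of_ne hb]
  · simp

lemma hasFDerivAt_g (e : Fin n → ℝ) (x : Fin n → ℝ) (hx : ∀ j, 0 < x j) :
    HasFDerivAt (fun y : Fin n → ℝ => ∏ j, y j ^ e j)
      ((∏ j, x j ^ e j) • Lmap e x) x := by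
  have hterm : ∀ j : Fin n, HasFDerivAt (fun y : Fin n → ℝ => e j * Real.log (y j))
      ((e j / x j) • (ContinuousLinearMap.proj j : (Fin n → ℝ) →L[ℝ] ℝ)) x := by
    intro j
    have h1 : HasFDerivAt (fun y : Fin n → ℝ => y j)
        (ContinuousLinearMap.proj j : (Fin n → ℝ) →L[ℝ] ℝ) x :=
      (ContinuousLinearMap.proj j : (Fin n → ℝ) →L[ℝ] ℝ).hasFDerivAt
    have h2 := h1.log (hx j).ne'
    have h3 := h2.const_mul (e j)
    have h4 : (e j / x j) • (ContinuousLinearMap.proj j : (Fin n → ℝ) →L[ℝ] ℝ)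
        = e j • (x j)⁻¹ • (ContinuousLinearMap.proj j : (Fin n → ℝ) →L[ℝ] ℝ) := by
      rw [smul_smul]
      congr 1
    rw [h4]
    exact h3

  have hlog : HasFDerivAt (fun y : Fin n → ℝ => ∑ j, e j * Real.log (y j))
      (Lmap e x) x := HasFDerivAt.fun_sum fun j _ => hterm j
  have hexp := hlog.exp
  have heq : (fun y : Fin n → ℝ => ∏ j, y j ^ e j)
      =ᶠ[nhds x] (fun y => Real.exp (∑ j, e j * Real.log (y j))) := by
    filter_upwards [isOpen_posOrthant.mem_nhds hx] with y hy
    rw [Real.exp_sum]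
    exact Finset.prod_congr rfl fun j _ => by
      rw [Real.rpow_def_of_pos (hy j), mul_comm]
  have hval : Real.exp (∑ j, e j * Real.log (x j)) = ∏ j, x j ^ e j := by
    rw [Real.exp_sum]
    exact Finset.prod_congr rfl fun j _ =>
      ((Real.rpow_def_of_pos (hx j) (e j)).trans (by rw [mul_comm])).symm
  have := hexp.congr_of_eventuallyEq heq
  rwa [hval] at this

lemma pd_g (e : Fin n → ℝ) (i : Fin n) (x : Fin n → ℝ) (hx : ∀ j, 0 < x j) :
    pd i (fun y : Fin n → ℝ => ∏ j, y j ^ e j) x = e i / x i * ∏ j, x j ^ e j := by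
  unfold pd
  rw [(hasFDerivAt_g e x hx).fderiv]
  rw [ContinuousLinearMap.smul_apply, Lmap_apply_single, smul_eq_mul]
  ring

lemma prod_update (e x : Fin n → ℝ) (ℓ : Fin n) (hx : 0 < x ℓ) :
    ∏ j, x j ^ (Function.update e ℓ (e ℓ - 1) j) = (∏ j, x j ^ e j) / x ℓ := by
  rw [Finset.prod_eq_mul_prod_sdiff_singleton_of_mem (Finset.mem_univ ℓ)
      (fun j => x j ^ (Function.update e ℓ (e ℓ - 1) j)),
    Finset.prod_eq_mul_prod_sdiff_singleton_of_mem (Finset.mem_univ ℓ) (fun j => x j ^ e j)]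
  have h1 : ∏ j ∈ Finset.univ \ {ℓ}, x j ^ (Function.update e ℓ (e ℓ - 1) j)
      = ∏ j ∈ Finset.univ \ {ℓ}, x j ^ e j := by
    apply Finset.prod_congr rfl
    intro j hj
    rw [Function.update_of_ne (by simpa using (Finset.mem_sdiff.mp hj).2)]
  rw [h1, Function.update_self, Real.rpow_sub hx, Real.rpow_one]
  ring

lemma pd_pd_g (e : Fin n → ℝ) (i ℓ : Fin n) (x : Fin n → ℝ) (hx : ∀ j, 0 < x j) :
    pd i (pd ℓ (fun y : Fin n → ℝ => ∏ j, y j ^ e j)) x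
      = e ℓ / x ℓ * ((if i = ℓ then e ℓ - 1 else e i) / x i) * ∏ j, x j ^ e j := by
  have heq : (fun z : Fin n → ℝ =>
        fderiv ℝ (fun y : Fin n → ℝ => ∏ j, y j ^ e j) z (Pi.single ℓ 1)) =ᶠ[nhds x]
      fun y => e ℓ * ∏ j, y j ^ (Function.update e ℓ (e ℓ - 1) j) := by
    filter_upwards [isOpen_posOrthant.mem_nhds hx] with y hy
    have hp := pd_g e ℓ y hy
    unfold pd at hp
    rw [hp, prod_update e y ℓ (hy ℓ)]
    ring
  have hd : DifferentiableAt ℝ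
      (fun y : Fin n → ℝ => ∏ j, y j ^ (Function.update e ℓ (e ℓ - 1) j)) x :=
    (hasFDerivAt_g _ x hx).differentiableAt
  unfold pd
  rw [heq.fderiv_eq, fderiv_const_mul hd]
  rw [ContinuousLinearMap.smul_apply, smul_eq_mul]
  have hpd := pd_g (Function.update e ℓ (e ℓ - 1)) i x hx
  unfold pd at hpd
  rw [hpd, prod_update e x ℓ (hx ℓ), Function.update_apply]
  ring

end Aux

/-- With `c_j ≥ 0`, `μ_j = √(1+c_j) - 1` and `f(λ) = Π_j λ_j^{μ_j/2}`, the
function `f` is an eigenfunction of `Ĝ - ¼ Σ_j c_j (1-λ_j)/λ_j` with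
eigenvalue `-[(n-1) Σ_j μ_j + ¼ Σ_{j≠ℓ} μ_jμ_ℓ]`. -/
theorem Ghat_schroedinger_eigenfunction (n : ℕ) (hn : 1 ≤ n)
    (c : Fin n → ℝ) (hc : ∀ j, 0 ≤ c j)
    (μ : Fin n → ℝ) (hμ : ∀ j, μ j = Real.sqrt (1 + c j) - 1)
    (lam : Fin n → ℝ) (hlam : ∀ j, 0 < lam j) :
    Ghat n (fun x => ∏ j, x j ^ (μ j / 2)) lam
      - (1/4) * (∑ j, c j * ((1 - lam j) / lam j)) * ∏ j, lam j ^ (μ j / 2)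
    = -(((n : ℝ) - 1) * (∑ j, μ j) +
          (1/4) * ∑ j, ∑ ℓ, if j = ℓ then 0 else μ j * μ ℓ)
        * ∏ j, lam j ^ (μ j / 2) := by
  have hcμ : ∀ j, c j = μ j ^ 2 + 2 * μ j := by
    intro j
    have h0 : (0:ℝ) ≤ 1 + c j := by linarith [hc j]
    have h1 : Real.sqrt (1 + c j) ^ 2 = 1 + c j := Real.sq_sqrt h0
    have h2 : Real.sqrt (1 + c j) = μ j + 1 := by rw [hμ j]; ring
    rw [h2] at h1
    nlinarith [h1]
  have hpd1 : ∀ i, pd i (fun x : Fin n → ℝ => ∏ j, x j ^ (μ j / 2)) lam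
      = (μ i / 2) / lam i * ∏ j, lam j ^ (μ j / 2) :=
    fun i => pd_g (fun j => μ j / 2) i lam hlam
  have hpd2 : ∀ i ℓ, pd i (pd ℓ (fun x : Fin n → ℝ => ∏ j, x j ^ (μ j / 2))) lam
      = μ ℓ / 2 / lam ℓ * ((if i = ℓ then μ ℓ / 2 - 1 else μ i / 2) / lam i)
          * ∏ j, lam j ^ (μ j / 2) :=
    fun i ℓ => pd_pd_g (fun j => μ j / 2) i ℓ lam hlam
  unfold Ghat
  have SA : (∑ j, lam j * (1 - lam j)
        * pd j (pd j (fun x : Fin n → ℝ => ∏ k, x k ^ (μ k / 2))) lam)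
      = ∑ j, ((μ j / 2) * (μ j / 2 - 1) * ((1 - lam j) / lam j))
          * ∏ k, lam k ^ (μ k / 2) := by
    refine Finset.sum_congr rfl fun j _ => ?_
    rw [hpd2 j j, if_pos rfl]
    have hl := (hlam j).ne'
    field_simp
  have SB : (∑ j, (2 - 2 * (n:ℝ) * lam j)
        * pd j (fun x : Fin n → ℝ => ∏ k, x k ^ (μ k / 2)) lam)
      = ∑ j, ((2 - 2 * (n:ℝ) * lam j) * (μ j / 2) / lam j)
          * ∏ k, lam k ^ (μ k / 2) := by
    refine Finset.sum_congr rfl fun j _ => ?_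
    rw [hpd1 j]
    ring
  have SD : (∑ j, ∑ ℓ, if j = ℓ then 0 else lam j * lam ℓ
        * pd j (pd ℓ (fun x : Fin n → ℝ => ∏ k, x k ^ (μ k / 2))) lam)
      = ∑ j, ∑ ℓ, (if j = ℓ then 0 else (μ j / 2) * (μ ℓ / 2))
          * ∏ k, lam k ^ (μ k / 2) := by
    refine Finset.sum_congr rfl fun j _ => Finset.sum_congr rfl fun ℓ _ => ?_
    by_cases h : j = ℓ
    · simp [h]
    · rw [if_neg h, if_neg h, hpd2 j ℓ, if_neg h]
      have hl1 := (hlam j).ne'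
      have hl2 := (hlam ℓ).ne'
      field_simp
  rw [SA, SB, SD]
  simp only [← Finset.sum_mul]
  have hA : (∑ j, (μ j / 2) * (μ j / 2 - 1) * ((1 - lam j) / lam j))
      + (∑ j, (2 - 2 * (n:ℝ) * lam j) * (μ j / 2) / lam j)
      - (1/4) * (∑ j, c j * ((1 - lam j) / lam j))
      = (1 - (n:ℝ)) * ∑ j, μ j := by
    rw [Finset.mul_sum, Finset.mul_sum, ← Finset.sum_add_distrib,
      ← Finset.sum_sub_distrib]
    refine Finset.sum_congr rfl fun j _ => ?_
    have hl := (hlam j).ne'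
    rw [hcμ j]
    field_simp
    ring
  have hD : (∑ j, ∑ ℓ, if j = ℓ then 0 else (μ j / 2) * (μ ℓ / 2))
      = (1/4) * ∑ j, ∑ ℓ, if j = ℓ then 0 else μ j * μ ℓ := by
    rw [Finset.mul_sum]
    refine Finset.sum_congr rfl fun j _ => ?_
    rw [Finset.mul_sum]
    refine Finset.sum_congr rfl fun ℓ _ => ?_
    by_cases h : j = ℓ
    · simp [h]
    · rw [if_neg h, if_neg h]
      ring
  linear_combination (∏ k, lam k ^ (μ k / 2)) * hA - (∏ k, lam k ^ (μ k / 2)) * hD
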